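/- arXiv:1208.3817 — 3 statements merged into one kernel-verified Lean document; each statement's English description precedes it below -/
import Mathlib

section
/- With f_{+-}(μ) = (1/√(2π)) e^{iπ/4 + μπ/2} Γ(1/2 - iμ) and f_{-+}(μ) = (1/√(2π)) e^{iπ/4 - μπ/2} Γ(1/2 + iμ), for all real μ one has |f_{+-}(μ)|² + |f_{-+}(μ)|² = 1. -/
open Real Complex

/-- `f_{+-}(μ) = (1/√(2π)) e^{iπ/4 + μπ/2} Γ(1/2 - iμ)` -/
noncomputable def fPlusMinus (μ : ℝ) : ℂ :=
  (1 / Real.sqrt (2 * Real.pi) : ℝ) *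
    Complex.exp ((Real.pi : ℂ) / 4 * Complex.I + (μ : ℂ) * Real.pi / 2) *
    Complex.Gamma (1 / 2 - (μ : ℂ) * Complex.I)

/-- `f_{-+}(μ) = (1/√(2π)) e^{iπ/4 - μπ/2} Γ(1/2 + iμ)` -/
noncomputable def fMinusPlus (μ : ℝ) : ℂ :=
  (1 / Real.sqrt (2 * Real.pi) : ℝ) *
    Complex.exp ((Real.pi : ℂ) / 4 * Complex.I - (μ : ℂ) * Real.pi / 2) *
    Complex.Gamma (1 / 2 + (μ : ℂ) * Complex.I)

lemma gamma_prod (μ : ℝ) :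
    Complex.Gamma (1 / 2 + (μ : ℂ) * Complex.I) * Complex.Gamma (1 / 2 - (μ : ℂ) * Complex.I)
      = (Real.pi : ℂ) / Real.cosh (Real.pi * μ) := by
  have h2 := Complex.Gamma_mul_Gamma_one_sub (1 / 2 + (μ : ℂ) * Complex.I)
  have h3 : (1 : ℂ) - (1 / 2 + (μ : ℂ) * Complex.I) = 1 / 2 - (μ : ℂ) * Complex.I := by ring
  rw [h3] at h2
  rw [h2]
  congr 1
  have : Complex.sin ((Real.pi : ℂ) * (1 / 2 + (μ : ℂ) * Complex.I))
      = Complex.cos ((Real.pi : ℂ) * μ * Complex.I) := by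
    rw [show (Real.pi : ℂ) * (1 / 2 + (μ : ℂ) * Complex.I)
        = (Real.pi : ℂ)/2 + (Real.pi : ℂ) * μ * Complex.I by ring, Complex.sin_add]
    simp [Complex.sin_pi_div_two, Complex.cos_pi_div_two]
  rw [this, Complex.cos_mul_I]
  push_cast
  rfl

lemma gamma_abs_sq (μ : ℝ) :
    (‖Complex.Gamma (1 / 2 + (μ : ℂ) * Complex.I)‖ ^ 2 : ℝ)
      = Real.pi / Real.cosh (Real.pi * μ) := by
  have h1 : (starRingEnd ℂ) (1 / 2 + (μ : ℂ) * Complex.I) = 1 / 2 - (μ : ℂ) * Complex.I := by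
    simp [Complex.ext_iff]
  have habs : ((‖Complex.Gamma (1 / 2 + (μ : ℂ) * Complex.I)‖ ^ 2 : ℝ) : ℂ)
      = Complex.Gamma (1 / 2 + (μ : ℂ) * Complex.I)
        * Complex.Gamma (1 / 2 - (μ : ℂ) * Complex.I) := by
    conv_rhs => rw [← h1, Complex.Gamma_conj, Complex.mul_conj]
    rw [Complex.sq_norm]
  rw [gamma_prod μ] at habs
  have := Complex.ofReal_inj.mp (by push_cast at habs ⊢; exact habs :
    ((‖Complex.Gamma (1 / 2 + (μ : ℂ) * Complex.I)‖ ^ 2 : ℝ) : ℂ)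
      = ((Real.pi / Real.cosh (Real.pi * μ) : ℝ) : ℂ))
  exact this

lemma gamma_abs_sq' (μ : ℝ) :
    (‖Complex.Gamma (1 / 2 - (μ : ℂ) * Complex.I)‖ ^ 2 : ℝ)
      = Real.pi / Real.cosh (Real.pi * μ) := by
  have := gamma_abs_sq (-μ)
  push_cast at this
  rw [show (1:ℂ)/2 + -μ * Complex.I = 1/2 - (μ:ℂ) * Complex.I by ring] at this
  rwa [show Real.pi * -μ = -(Real.pi*μ) by ring, Real.cosh_neg] at this

theorem sq_abs_fPlusMinus_add_sq_abs_fMinusPlus (μ : ℝ) :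
    ‖fPlusMinus μ‖ ^ 2 + ‖fMinusPlus μ‖ ^ 2 = 1 := by
  have hg := gamma_abs_sq μ
  have hg' := gamma_abs_sq' μ
  have he1 : ‖Complex.exp ((Real.pi : ℂ) / 4 * Complex.I + (μ : ℂ) * Real.pi / 2)‖
      = Real.exp (μ * Real.pi / 2) := by
    rw [Complex.norm_exp]
    congr 1
    simp [Complex.add_re, Complex.div_re]
  have he2 : ‖Complex.exp ((Real.pi : ℂ) / 4 * Complex.I - (μ : ℂ) * Real.pi / 2)‖
      = Real.exp (-(μ * Real.pi / 2)) := by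
    rw [Complex.norm_exp]
    congr 1
    simp [Complex.sub_re, Complex.div_re]
  have hsq : Real.sqrt (2 * Real.pi) ^ 2 = 2 * Real.pi :=
    Real.sq_sqrt (by positivity)
  have hcosh : Real.cosh (Real.pi * μ)
      = (Real.exp (Real.pi * μ) + Real.exp (-(Real.pi * μ))) / 2 := Real.cosh_eq _
  have hch : Real.cosh (Real.pi * μ) ≠ 0 := (Real.cosh_pos _).ne'
  simp only [fPlusMinus, fMinusPlus, map_mul, norm_mul, mul_pow, he1, he2, Complex.norm_real, Real.norm_eq_abs]
  rw [hg, hg']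
  rw [abs_of_pos (by positivity : (0:ℝ) < 1 / Real.sqrt (2 * Real.pi))]
  rw [div_pow, one_pow, hsq, ← Real.exp_nat_mul, ← Real.exp_nat_mul]
  field_simp
  rw [hcosh]
  rw [show Real.pi * ((2:ℕ):ℝ) * μ / 2 = Real.pi*μ by push_cast; ring]
  ring
end

section
/- With f_{+-}, f_{-+} as above, for all μ ≥ 0 one has |f_{+-}(μ)| + |f_{-+}(μ)| = √(1 + 1/cosh(πμ)), and consequently 1 ≤ |f_{+-}(μ)| + |f_{-+}(μ)| ≤ √2. -/
open Real Complex

lemma gamma_conj_half (μ : ℝ) :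
    Complex.Gamma (1 / 2 - (μ : ℂ) * Complex.I) =
      (starRingEnd ℂ) (Complex.Gamma (1 / 2 + (μ : ℂ) * Complex.I)) := by
  have hc : (starRingEnd ℂ) (1 / 2 + (μ : ℂ) * Complex.I) = 1 / 2 - (μ : ℂ) * Complex.I := by
    simp [Complex.ext_iff]
  have h2 := Complex.Gamma_conj (1 / 2 + (μ : ℂ) * Complex.I)
  rwa [hc] at h2

lemma absGamma_sq (μ : ℝ) : (‖Complex.Gamma (1 / 2 + (μ : ℂ) * Complex.I)‖)^2
    = Real.pi / Real.cosh (Real.pi * μ) := by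
  have h1 : (1:ℂ) - (1 / 2 + (μ : ℂ) * Complex.I) = 1 / 2 - (μ : ℂ) * Complex.I := by ring
  have h3 := Complex.Gamma_mul_Gamma_one_sub (1 / 2 + (μ : ℂ) * Complex.I)
  rw [h1, gamma_conj_half, Complex.mul_conj] at h3
  have hsin : Complex.sin (Real.pi * (1 / 2 + (μ : ℂ) * Complex.I))
      = (Real.cosh (Real.pi * μ) : ℂ) := by
    have : (Real.pi : ℂ) * (1 / 2 + (μ : ℂ) * Complex.I)
        = Real.pi / 2 + ((Real.pi * μ : ℝ) : ℂ) * Complex.I := by push_cast; ring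
    rw [this, Complex.sin_add, Complex.sin_pi_div_two, Complex.cos_pi_div_two,
      Complex.cos_mul_I, Complex.ofReal_cosh]
    ring
  rw [hsin, ← Complex.ofReal_div] at h3
  rw [Complex.sq_norm, Complex.ofReal_inj.mp h3]

theorem abs_fPlusMinus_add_abs_fMinusPlus (μ : ℝ) (hμ : 0 ≤ μ) :
    ‖fPlusMinus μ‖ + ‖fMinusPlus μ‖ =
      Real.sqrt (1 + 1 / Real.cosh (Real.pi * μ)) ∧
    1 ≤ ‖fPlusMinus μ‖ + ‖fMinusPlus μ‖ ∧
    ‖fPlusMinus μ‖ + ‖fMinusPlus μ‖ ≤ Real.sqrt 2 := by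
  set A := ‖Complex.Gamma (1 / 2 + (μ : ℂ) * Complex.I)‖ with hA
  have hAnn : 0 ≤ A := norm_nonneg _
  have habs1 : ‖fPlusMinus μ‖
      = (1 / Real.sqrt (2 * Real.pi)) * Real.exp (μ * Real.pi / 2) * A := by
    unfold fPlusMinus
    rw [gamma_conj_half, norm_mul, norm_mul, Complex.norm_real, Real.norm_eq_abs, Complex.norm_exp, Complex.norm_conj]
    congr 2
    · exact abs_of_nonneg (by positivity)
    · congr 1; simp
  have habs2 : ‖fMinusPlus μ‖
      = (1 / Real.sqrt (2 * Real.pi)) * Real.exp (-(μ * Real.pi / 2)) * A := by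
    unfold fMinusPlus
    rw [norm_mul, norm_mul, Complex.norm_real, Real.norm_eq_abs, Complex.norm_exp]
    congr 2
    · exact abs_of_nonneg (by positivity)
    · congr 1; simp
  set S := ‖fPlusMinus μ‖ + ‖fMinusPlus μ‖ with hS
  have hSnn : 0 ≤ S := by
    rw [hS, habs1, habs2]; positivity
  have hcoshpos : 0 < Real.cosh (Real.pi * μ) := Real.cosh_pos _
  have hS2 : S ^ 2 = 1 + 1 / Real.cosh (Real.pi * μ) := by
    have hA2 : A ^ 2 = Real.pi / Real.cosh (Real.pi * μ) := by
      rw [hA]; exact absGamma_sq μ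
    have hsq : (1 / Real.sqrt (2 * Real.pi)) ^ 2 = 1 / (2 * Real.pi) := by
      rw [div_pow, one_pow, Real.sq_sqrt (by positivity)]
    have hexp : (Real.exp (μ * Real.pi / 2) + Real.exp (-(μ * Real.pi / 2))) ^ 2
        = 2 * Real.cosh (Real.pi * μ) + 2 := by
      rw [Real.cosh_eq]
      have h1 : Real.exp (μ * Real.pi / 2) * Real.exp (μ * Real.pi / 2)
          = Real.exp (Real.pi * μ) := by rw [← Real.exp_add]; ring_nf
      have h2 : Real.exp (-(μ * Real.pi / 2)) * Real.exp (-(μ * Real.pi / 2))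
          = Real.exp (-(Real.pi * μ)) := by rw [← Real.exp_add]; ring_nf
      have h3 : Real.exp (μ * Real.pi / 2) * Real.exp (-(μ * Real.pi / 2)) = 1 := by
        rw [← Real.exp_add]; simp
      nlinarith [h1, h2, h3]
    have key : S ^ 2 = (1 / (2 * Real.pi)) * (2 * Real.cosh (Real.pi * μ) + 2) * A ^ 2 := by
      rw [hS, habs1, habs2, ← hsq, ← hexp]; ring
    rw [key, hA2]
    field_simp
  have heq : S = Real.sqrt (1 + 1 / Real.cosh (Real.pi * μ)) := by
    rw [← hS2, Real.sqrt_sq hSnn]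
  refine ⟨heq, ?_, ?_⟩
  · rw [heq]
    have h : (1:ℝ) ≤ 1 + 1 / Real.cosh (Real.pi * μ) := by
      have : 0 < 1 / Real.cosh (Real.pi * μ) := by positivity
      linarith
    calc (1:ℝ) = Real.sqrt 1 := Real.sqrt_one.symm
      _ ≤ _ := Real.sqrt_le_sqrt h
  · rw [heq]
    apply Real.sqrt_le_sqrt
    have h1 : 1 ≤ Real.cosh (Real.pi * μ) := Real.one_le_cosh _
    have : 1 / Real.cosh (Real.pi * μ) ≤ 1 := by
      rw [div_le_one hcoshpos]; exact h1
    linarith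
end

section
/- Let λ ∈ ℂ. Every solution x of the differential equation −(d/dt)(t² x'(t)) = λ x(t) on (0,∞) that belongs to L²((0,∞)) is identically zero. Equivalently: for λ ≠ 1/4 the general solution is c₁ t^{a₁} + c₂ t^{a₂} with a_{1,2} = −1/2 ± √(1/4 − λ), and for λ = 1/4 it is c₁ t^{−1/2} + c₂ t^{−1/2} ln t; no nonzero such function is square-integrable on (0,∞). -/
set_option maxHeartbeats 1000000


open MeasureTheory Set

namespace EulerNoL2

private lemma rpow_two_eq (x : ℝ) : x ^ (2:ℝ) = x * x := by
  rw [show (2:ℝ) = ((2:ℕ):ℝ) by norm_num, Real.rpow_natCast]; ring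

private lemma norm_cpow_pos {t : ℝ} (ht : 0 < t) (a : ℂ) : ‖(t:ℂ) ^ a‖ = t ^ a.re := by
  rw [Complex.norm_cpow_eq_rpow_re_of_pos ht]

private lemma sqrt_prop (z : ℂ) (hz : z ≠ 0) :
    0 ≤ (z ^ ((1:ℂ)/2)).re ∧ z ^ ((1:ℂ)/2) ≠ 0 := by
  rw [Complex.cpow_def_of_ne_zero hz]
  refine ⟨?_, Complex.exp_ne_zero _⟩
  rw [Complex.exp_re]
  apply mul_nonneg (Real.exp_pos _).le
  apply Real.cos_nonneg_of_mem_Icc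
  have h1 := Complex.neg_pi_lt_arg z
  have h2 := Complex.arg_le_pi z
  constructor <;> · simp [Complex.log_im]; linarith

private lemma no_integrable_of_inv_le {T : ℝ} (hT : 0 < T) {c : ℝ} (hc : 0 < c) {F : ℝ → ℝ}
    (hF : IntegrableOn F (Ioi T)) (hle : ∀ t ∈ Ioi T, c * t ^ (-1 : ℝ) ≤ F t) : False := by
  have hm : AEStronglyMeasurable (fun t : ℝ => c * t ^ (-1:ℝ)) (volume.restrict (Ioi T)) := by
    apply Measurable.aestronglyMeasurable; fun_prop
  have hint : IntegrableOn (fun t : ℝ => c * t ^ (-1:ℝ)) (Ioi T) := by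
    refine hF.mono' hm ?_
    rw [ae_restrict_iff' measurableSet_Ioi]
    filter_upwards with t ht
    rw [Real.norm_eq_abs,
      abs_of_nonneg (mul_nonneg hc.le (Real.rpow_nonneg (hT.trans ht).le _))]
    exact hle t ht
  have h2 : IntegrableOn (fun t : ℝ => t ^ (-1:ℝ)) (Ioi T) := by
    have h3 : IntegrableOn (fun x : ℝ => c⁻¹ * (c * x ^ (-1:ℝ))) (Ioi T) := hint.const_mul c⁻¹
    refine h3.congr_fun (fun t _ => ?_) measurableSet_Ioi
    dsimp only; rw [← mul_assoc, inv_mul_cancel₀ hc.ne', one_mul]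
  rw [integrableOn_Ioi_rpow_iff hT] at h2
  norm_num at h2

private lemma no_integrable_of_rpow_le0 {c : ℝ} (hc : 0 < c) {p : ℝ} (hp : p ≤ -1) {F : ℝ → ℝ}
    (hF : IntegrableOn F (Ioo 0 1)) (hle : ∀ t ∈ Ioo (0:ℝ) 1, c * t ^ p ≤ F t) : False := by
  have hm : AEStronglyMeasurable (fun t : ℝ => c * t ^ p) (volume.restrict (Ioo (0:ℝ) 1)) := by
    apply Measurable.aestronglyMeasurable; fun_prop
  have hint : IntegrableOn (fun t : ℝ => c * t ^ p) (Ioo (0:ℝ) 1) := by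
    refine hF.mono' hm ?_
    rw [ae_restrict_iff' measurableSet_Ioo]
    filter_upwards with t ht
    rw [Real.norm_eq_abs, abs_of_nonneg (mul_nonneg hc.le (Real.rpow_nonneg ht.1.le _))]
    exact hle t ht
  have h2 : IntegrableOn (fun t : ℝ => t ^ p) (Ioo (0:ℝ) 1) := by
    have h3 : IntegrableOn (fun x : ℝ => c⁻¹ * (c * x ^ p)) (Ioo (0:ℝ) 1) := hint.const_mul c⁻¹
    refine h3.congr_fun (fun t _ => ?_) measurableSet_Ioo
    dsimp only; rw [← mul_assoc, inv_mul_cancel₀ hc.ne', one_mul]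
  rw [intervalIntegral.integrableOn_Ioo_rpow_iff zero_lt_one] at h2
  linarith

private lemma kill_pair (s : ℂ) (hs : s ≠ 0) (hre : 0 ≤ s.re) (c₁ c₂ : ℂ)
    (h : MemLp (fun t : ℝ => c₁ * (t:ℂ) ^ (-1/2 + s) + c₂ * (t:ℂ) ^ (-1/2 - s)) 2
      (volume.restrict (Ioi (0:ℝ)))) : c₁ = 0 ∧ c₂ = 0 := by
  set f : ℝ → ℂ := fun t => c₁ * (t:ℂ) ^ (-1/2 + s) + c₂ * (t:ℂ) ^ (-1/2 - s) with hf
  have hI : IntegrableOn (fun t => ‖f t‖ ^ (2:ℝ)) (Ioi (0:ℝ)) := by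
    have := h.integrable_norm_rpow two_ne_zero ENNReal.ofNat_ne_top
    simpa [IntegrableOn] using this
  have hre1 : (-1/2 + s : ℂ).re = -1/2 + s.re := by simp
  have hre2 : (-1/2 - s : ℂ).re = -1/2 - s.re := by simp
  have hc₁ : c₁ = 0 := by
    by_contra hc₁
    have hc₁' : 0 < ‖c₁‖ := norm_pos_iff.mpr hc₁
    rcases hre.lt_or_eq with hσ | hσ0
    · -- 0 < s.re
      set σ := s.re with hσdef
      set T : ℝ := max 1 ((2 * ‖c₂‖ / ‖c₁‖) ^ (1/(2*σ))) with hTdef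
      have hT1 : (1:ℝ) ≤ T := le_max_left _ _
      have hT0 : (0:ℝ) < T := lt_of_lt_of_le one_pos hT1
      refine no_integrable_of_inv_le hT0 (c := (‖c₁‖/2) ^ (2:ℝ))
        (Real.rpow_pos_of_pos (div_pos hc₁' two_pos) _)
        (hI.mono_set (Ioi_subset_Ioi hT0.le)) ?_
      intro t ht
      have htT : T < t := ht
      have ht1 : (1:ℝ) ≤ t := hT1.trans (le_of_lt htT)
      have ht0 : (0:ℝ) < t := lt_of_lt_of_le one_pos ht1
      have e1 : ‖c₁ * (t:ℂ) ^ (-1/2 + s)‖ = ‖c₁‖ * t ^ (-1/2 + σ) := by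
        rw [norm_mul, norm_cpow_pos ht0, hre1]
      have e2 : ‖c₂ * (t:ℂ) ^ (-1/2 - s)‖ = ‖c₂‖ * t ^ (-1/2 - σ) := by
        rw [norm_mul, norm_cpow_pos ht0, hre2]
      have tri : ‖c₁‖ * t ^ (-1/2 + σ) - ‖c₂‖ * t ^ (-1/2 - σ) ≤ ‖f t‖ := by
        have h4 := norm_sub_norm_le (c₁ * (t:ℂ) ^ (-1/2 + s)) (-(c₂ * (t:ℂ) ^ (-1/2 - s)))
        rw [sub_neg_eq_add, norm_neg, e1, e2] at h4
        exact h4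
      have hge : 2 * ‖c₂‖ / ‖c₁‖ ≤ t ^ (2*σ) := by
        calc 2*‖c₂‖/‖c₁‖ = ((2*‖c₂‖/‖c₁‖) ^ (1/(2*σ))) ^ (2*σ) := by
              rw [← Real.rpow_mul (by positivity), one_div,
                inv_mul_cancel₀ (by positivity), Real.rpow_one]
          _ ≤ t ^ (2*σ) :=
              Real.rpow_le_rpow (Real.rpow_nonneg (by positivity) _)
                ((le_max_right _ _).trans (le_of_lt htT)) (by positivity)
      have h2 : ‖c₂‖ * t ^ (-1/2 - σ) ≤ ‖c₁‖/2 * t ^ (-1/2 + σ) := by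
        have e : t ^ (-1/2 + σ : ℝ) = t ^ (-1/2 - σ : ℝ) * t ^ (2*σ) := by
          rw [← Real.rpow_add ht0]; congr 1; ring
        have hc2 : ‖c₂‖ ≤ ‖c₁‖/2 * t ^ (2*σ) := by
          rw [div_le_iff₀ hc₁'] at hge; nlinarith
        calc ‖c₂‖ * t ^ (-1/2 - σ : ℝ)
            ≤ (‖c₁‖/2 * t ^ (2*σ)) * t ^ (-1/2 - σ : ℝ) :=
              mul_le_mul_of_nonneg_right hc2 (Real.rpow_nonneg ht0.le _)
          _ = ‖c₁‖/2 * t ^ (-1/2 + σ : ℝ) := by rw [e]; ring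
      have hmono : t ^ (-1/2 : ℝ) ≤ t ^ (-1/2 + σ : ℝ) :=
        Real.rpow_le_rpow_of_exponent_le ht1 (by linarith)
      have hmono' : ‖c₁‖/2 * t ^ (-1/2:ℝ) ≤ ‖c₁‖/2 * t ^ (-1/2+σ:ℝ) :=
        mul_le_mul_of_nonneg_left hmono (by positivity)
      have hlow : ‖c₁‖/2 * t ^ (-1/2 : ℝ) ≤ ‖f t‖ := by linarith
      have sq1 : (‖c₁‖/2) ^ (2:ℝ) * t ^ (-1:ℝ) = (‖c₁‖/2 * t ^ (-1/2:ℝ)) ^ (2:ℝ) := by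
        rw [Real.mul_rpow (by positivity) (Real.rpow_nonneg ht0.le _),
          ← Real.rpow_mul ht0.le]
        norm_num
      rw [sq1]
      exact Real.rpow_le_rpow (by positivity) hlow (by norm_num)
    · -- s.re = 0
      set β := s.im with hβdef
      have hsβ : s = (β:ℂ) * Complex.I := by
        apply Complex.ext <;> simp [← hσ0, hβdef]
      have hβ : β ≠ 0 := fun h0 => hs (by rw [hsβ, h0]; simp)
      set σc : ℝ := Real.exp (Real.pi / (2*β)) with hσcdef
      have hσpos : 0 < σc := Real.exp_pos _
      have hσC : (σc:ℂ) ≠ 0 := by exact_mod_cast hσpos.ne'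
      have hβ' : (β:ℂ) ≠ 0 := by exact_mod_cast hβ
      have hkey : (σc:ℂ) ^ (2*s) = -1 := by
        rw [Complex.cpow_def_of_ne_zero hσC, ← Complex.ofReal_log hσpos.le, hσcdef,
          Real.log_exp,
          show ((Real.pi / (2*β) : ℝ) : ℂ) * (2*s) = Real.pi * Complex.I by
            rw [hsβ]; push_cast; field_simp]
        exact Complex.exp_pi_mul_I
      have hFscaled : IntegrableOn (fun t => ‖f (σc * t)‖ ^ (2:ℝ)) (Ioi (0:ℝ)) := by
        have := (integrableOn_Ioi_comp_mul_left_iff (fun t => ‖f t‖ ^ (2:ℝ)) 0 hσpos).mpr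
          (by rw [mul_zero]; exact hI)
        simpa using this
      set g : ℝ → ℂ := fun t => -(c₁ * (t:ℂ) ^ (-1/2 + s)) + c₂ * (t:ℂ) ^ (-1/2 - s) with hg
      set D : ℝ := ‖(σc:ℂ) ^ (-1/2 - s)‖ with hDdef
      have hDpos : 0 < D := by
        rw [hDdef]
        apply norm_pos_iff.mpr
        rw [Complex.cpow_def_of_ne_zero hσC]
        exact Complex.exp_ne_zero _
      have hEq : EqOn (fun t => ‖f (σc * t)‖ ^ (2:ℝ))
          (fun t => D ^ (2:ℝ) * ‖g t‖ ^ (2:ℝ)) (Ioi (0:ℝ)) := by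
        intro t ht
        have ht0 : (0:ℝ) < t := ht
        have hcast : ((σc * t : ℝ) : ℂ) = (σc:ℂ) * (t:ℂ) := by push_cast; ring
        have hfσ : f (σc * t) = (σc:ℂ) ^ (-1/2 - s) * g t := by
          simp only [hf, hg, hcast]
          simp only [Complex.mul_cpow_ofReal_nonneg hσpos.le ht0.le]
          rw [show (-1/2 + s : ℂ) = (-1/2 - s) + 2*s by ring,
            Complex.cpow_add _ _ hσC, hkey]
          ring
        simp only [hfσ, norm_mul]
        rw [Real.mul_rpow (norm_nonneg _) (norm_nonneg _)]
      have hG : IntegrableOn (fun t => ‖g t‖ ^ (2:ℝ)) (Ioi (0:ℝ)) := by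
        have h1 := hFscaled.congr_fun hEq measurableSet_Ioi
        have h2 : IntegrableOn
            (fun t => (D ^ (2:ℝ))⁻¹ * (D ^ (2:ℝ) * ‖g t‖ ^ (2:ℝ))) (Ioi (0:ℝ)) :=
          h1.const_mul (D ^ (2:ℝ))⁻¹
        refine h2.congr_fun (fun t _ => ?_) measurableSet_Ioi
        dsimp only; rw [← mul_assoc, inv_mul_cancel₀ (Real.rpow_pos_of_pos hDpos _).ne', one_mul]
      have hadd : IntegrableOn (fun t => ‖f t‖ ^ (2:ℝ) + ‖g t‖ ^ (2:ℝ)) (Ioi (0:ℝ)) :=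
        hI.add hG
      have hFG : IntegrableOn (fun t => 2 * (‖f t‖ ^ (2:ℝ) + ‖g t‖ ^ (2:ℝ))) (Ioi (0:ℝ)) :=
        hadd.const_mul 2
      have hFG1 : IntegrableOn (fun t => 2 * (‖f t‖ ^ (2:ℝ) + ‖g t‖ ^ (2:ℝ))) (Ioi (1:ℝ)) :=
        hFG.mono_set (Ioi_subset_Ioi zero_le_one)
      refine no_integrable_of_inv_le zero_lt_one (c := (2*‖c₁‖) ^ (2:ℝ))
        (Real.rpow_pos_of_pos (mul_pos two_pos hc₁') _) hFG1 ?_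
      intro t ht
      have ht1 : (1:ℝ) < t := ht
      have ht0 : (0:ℝ) < t := lt_trans zero_lt_one ht1
      have hdiff : f t - g t = 2 * c₁ * (t:ℂ) ^ (-1/2 + s) := by
        simp only [hf, hg]; ring
      have hn : ‖f t - g t‖ = 2*‖c₁‖ * t ^ (-1/2:ℝ) := by
        rw [hdiff, norm_mul, norm_mul, norm_cpow_pos ht0, hre1, ← hσ0]
        norm_num
      have htri : ‖f t - g t‖ ≤ ‖f t‖ + ‖g t‖ := norm_sub_le _ _
      have sq1 : (2*‖c₁‖) ^ (2:ℝ) * t ^ (-1:ℝ) = (2*‖c₁‖ * t ^ (-1/2:ℝ)) ^ (2:ℝ) := by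
        rw [Real.mul_rpow (by positivity) (Real.rpow_nonneg ht0.le _),
          ← Real.rpow_mul ht0.le]
        norm_num
      rw [sq1, ← hn]
      calc ‖f t - g t‖ ^ (2:ℝ) ≤ (‖f t‖ + ‖g t‖) ^ (2:ℝ) :=
            Real.rpow_le_rpow (norm_nonneg _) htri (by norm_num)
        _ ≤ 2 * (‖f t‖ ^ (2:ℝ) + ‖g t‖ ^ (2:ℝ)) := by
            rw [rpow_two_eq, rpow_two_eq, rpow_two_eq]
            nlinarith [norm_nonneg (f t), norm_nonneg (g t), sq_nonneg (‖f t‖ - ‖g t‖)]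
  have hc₂ : c₂ = 0 := by
    by_contra hc₂
    have hc₂' : 0 < ‖c₂‖ := norm_pos_iff.mpr hc₂
    refine no_integrable_of_rpow_le0 (c := ‖c₂‖ ^ (2:ℝ)) (Real.rpow_pos_of_pos hc₂' _)
      (p := (-1 - 2*s.re : ℝ)) (by linarith) (hI.mono_set Ioo_subset_Ioi_self) ?_
    intro t ht
    have ht0 : 0 < t := ht.1
    have hft : ‖f t‖ = ‖c₂‖ * t ^ (-1/2 - s.re : ℝ) := by
      simp only [hf, hc₁, zero_mul, zero_add]
      rw [norm_mul, norm_cpow_pos ht0, hre2]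
    rw [hft, Real.mul_rpow hc₂'.le (Real.rpow_nonneg ht0.le _), ← Real.rpow_mul ht0.le,
      show (-1/2 - s.re)*2 = -1 - 2*s.re by ring]
  exact ⟨hc₁, hc₂⟩

private lemma kill_log (c₁ c₂ : ℂ)
    (h : MemLp (fun t : ℝ =>
        c₁ * (t:ℂ) ^ (-(1:ℂ)/2) + c₂ * (t:ℂ) ^ (-(1:ℂ)/2) * (Real.log t : ℂ)) 2
      (volume.restrict (Ioi (0:ℝ)))) : c₁ = 0 ∧ c₂ = 0 := by
  set f : ℝ → ℂ :=
    fun t => c₁ * (t:ℂ) ^ (-(1:ℂ)/2) + c₂ * (t:ℂ) ^ (-(1:ℂ)/2) * (Real.log t : ℂ) with hf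
  have hI : IntegrableOn (fun t => ‖f t‖ ^ (2:ℝ)) (Ioi (0:ℝ)) := by
    have := h.integrable_norm_rpow two_ne_zero ENNReal.ofNat_ne_top
    simpa [IntegrableOn] using this
  have hreE : (-(1:ℂ)/2).re = -1/2 := by simp
  set σc : ℝ := Real.exp 1 with hσcdef
  have hσpos : 0 < σc := Real.exp_pos _
  have hσC : (σc:ℂ) ≠ 0 := by exact_mod_cast hσpos.ne'
  have hFscaled : IntegrableOn (fun t => ‖f (σc * t)‖ ^ (2:ℝ)) (Ioi (0:ℝ)) := by
    have := (integrableOn_Ioi_comp_mul_left_iff (fun t => ‖f t‖ ^ (2:ℝ)) 0 hσpos).mpr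
      (by rw [mul_zero]; exact hI)
    simpa using this
  set g : ℝ → ℂ :=
    fun t => (c₁ + c₂) * (t:ℂ) ^ (-(1:ℂ)/2) + c₂ * (t:ℂ) ^ (-(1:ℂ)/2) * (Real.log t : ℂ) with hg
  set D : ℝ := ‖(σc:ℂ) ^ (-(1:ℂ)/2)‖ with hDdef
  have hDpos : 0 < D := by
    rw [hDdef]
    apply norm_pos_iff.mpr
    rw [Complex.cpow_def_of_ne_zero hσC]
    exact Complex.exp_ne_zero _
  have hEq : EqOn (fun t => ‖f (σc * t)‖ ^ (2:ℝ))
      (fun t => D ^ (2:ℝ) * ‖g t‖ ^ (2:ℝ)) (Ioi (0:ℝ)) := by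
    intro t ht
    have ht0 : (0:ℝ) < t := ht
    have hcast : ((σc * t : ℝ) : ℂ) = (σc:ℂ) * (t:ℂ) := by push_cast; ring
    have hlog : Real.log (σc * t) = 1 + Real.log t := by
      rw [Real.log_mul hσpos.ne' ht0.ne', hσcdef, Real.log_exp]
    have hfσ : f (σc * t) = (σc:ℂ) ^ (-(1:ℂ)/2) * g t := by
      simp only [hf, hg, hcast]
      simp only [Complex.mul_cpow_ofReal_nonneg hσpos.le ht0.le]
      rw [hlog]
      push_cast
      ring
    simp only [hfσ, norm_mul]
    rw [Real.mul_rpow (norm_nonneg _) (norm_nonneg _)]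
  have hG : IntegrableOn (fun t => ‖g t‖ ^ (2:ℝ)) (Ioi (0:ℝ)) := by
    have h1 := hFscaled.congr_fun hEq measurableSet_Ioi
    have h2 : IntegrableOn (fun t => (D ^ (2:ℝ))⁻¹ * (D ^ (2:ℝ) * ‖g t‖ ^ (2:ℝ))) (Ioi (0:ℝ)) :=
      h1.const_mul (D ^ (2:ℝ))⁻¹
    refine h2.congr_fun (fun t _ => ?_) measurableSet_Ioi
    dsimp only; rw [← mul_assoc, inv_mul_cancel₀ (Real.rpow_pos_of_pos hDpos _).ne', one_mul]
  have hc₂ : c₂ = 0 := by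
    by_contra hc₂
    have hc₂' : 0 < ‖c₂‖ := norm_pos_iff.mpr hc₂
    have hadd : IntegrableOn (fun t => ‖f t‖ ^ (2:ℝ) + ‖g t‖ ^ (2:ℝ)) (Ioi (0:ℝ)) :=
      hI.add hG
    have hFG : IntegrableOn (fun t => 2 * (‖f t‖ ^ (2:ℝ) + ‖g t‖ ^ (2:ℝ))) (Ioi (0:ℝ)) :=
      hadd.const_mul 2
    have hFG1 : IntegrableOn (fun t => 2 * (‖f t‖ ^ (2:ℝ) + ‖g t‖ ^ (2:ℝ))) (Ioi (1:ℝ)) :=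
      hFG.mono_set (Ioi_subset_Ioi zero_le_one)
    refine no_integrable_of_inv_le zero_lt_one (c := ‖c₂‖ ^ (2:ℝ))
      (Real.rpow_pos_of_pos hc₂' _) hFG1 ?_
    intro t ht
    have ht1 : (1:ℝ) < t := ht
    have ht0 : (0:ℝ) < t := lt_trans zero_lt_one ht1
    have hdiff : g t - f t = c₂ * (t:ℂ) ^ (-(1:ℂ)/2) := by
      simp only [hf, hg]; ring
    have hn : ‖g t - f t‖ = ‖c₂‖ * t ^ (-1/2:ℝ) := by
      rw [hdiff, norm_mul, norm_cpow_pos ht0, hreE]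
    have htri : ‖g t - f t‖ ≤ ‖f t‖ + ‖g t‖ := by
      have := norm_sub_le (g t) (f t); linarith
    have sq1 : ‖c₂‖ ^ (2:ℝ) * t ^ (-1:ℝ) = (‖c₂‖ * t ^ (-1/2:ℝ)) ^ (2:ℝ) := by
      rw [Real.mul_rpow hc₂'.le (Real.rpow_nonneg ht0.le _), ← Real.rpow_mul ht0.le]
      norm_num
    rw [sq1, ← hn]
    calc ‖g t - f t‖ ^ (2:ℝ) ≤ (‖f t‖ + ‖g t‖) ^ (2:ℝ) :=
          Real.rpow_le_rpow (norm_nonneg _) htri (by norm_num)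
      _ ≤ 2 * (‖f t‖ ^ (2:ℝ) + ‖g t‖ ^ (2:ℝ)) := by
          rw [rpow_two_eq, rpow_two_eq, rpow_two_eq]
          nlinarith [norm_nonneg (f t), norm_nonneg (g t), sq_nonneg (‖f t‖ - ‖g t‖)]
  have hc₁ : c₁ = 0 := by
    by_contra hc₁
    have hc₁' : 0 < ‖c₁‖ := norm_pos_iff.mpr hc₁
    refine no_integrable_of_inv_le zero_lt_one (c := ‖c₁‖ ^ (2:ℝ))
      (Real.rpow_pos_of_pos hc₁' _)
      (hI.mono_set (Ioi_subset_Ioi zero_le_one)) ?_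
    intro t ht
    have ht1 : (1:ℝ) < t := ht
    have ht0 : (0:ℝ) < t := lt_trans zero_lt_one ht1
    have hft : ‖f t‖ = ‖c₁‖ * t ^ (-1/2 : ℝ) := by
      simp only [hf, hc₂, zero_mul, mul_zero, add_zero]
      rw [norm_mul, norm_cpow_pos ht0, hreE]
    have sq1 : ‖c₁‖ ^ (2:ℝ) * t ^ (-1:ℝ) = (‖c₁‖ * t ^ (-1/2:ℝ)) ^ (2:ℝ) := by
      rw [Real.mul_rpow hc₁'.le (Real.rpow_nonneg ht0.le _), ← Real.rpow_mul ht0.le]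
      norm_num
    rw [sq1, ← hft]
  exact ⟨hc₁, hc₂⟩

end EulerNoL2

theorem no_L2_solution_of_euler_equation (lam : ℂ) :
    (lam ≠ 1 / 4 → ∀ c₁ c₂ : ℂ,
      MemLp (fun t : ℝ =>
          c₁ * (t : ℂ) ^ (-1 / 2 + (1 / 4 - lam) ^ ((1 : ℂ) / 2)) +
          c₂ * (t : ℂ) ^ (-1 / 2 - (1 / 4 - lam) ^ ((1 : ℂ) / 2))) 2
        (volume.restrict (Set.Ioi (0 : ℝ))) →
      c₁ = 0 ∧ c₂ = 0) ∧
    (lam = 1 / 4 → ∀ c₁ c₂ : ℂ,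
      MemLp (fun t : ℝ =>
          c₁ * (t : ℂ) ^ (-(1 : ℂ) / 2) +
          c₂ * (t : ℂ) ^ (-(1 : ℂ) / 2) * (Real.log t : ℂ)) 2
        (volume.restrict (Set.Ioi (0 : ℝ))) →
      c₁ = 0 ∧ c₂ = 0) := by
  constructor
  · intro hlam c₁ c₂ h
    have hz : (1/4 - lam : ℂ) ≠ 0 := sub_ne_zero.mpr (Ne.symm hlam)
    obtain ⟨hre, hs⟩ := EulerNoL2.sqrt_prop _ hz
    exact EulerNoL2.kill_pair _ hs hre c₁ c₂ h
  · intro _ c₁ c₂ h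
    exact EulerNoL2.kill_log c₁ c₂ h
end
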